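/- For every ε with 0 < ε < 1/2 there exists a unary MA-PostQFA M such that: a(c,x)+r(c,x) > 0 for all certificates and inputs; for every i ≥ 0, on certificate a^i and input a^(2^i) the acceptance probability of M is at least 1−ε; and for every n that is not a power of 2 and every i ≥ 0, on certificate a^i and input a^n the rejection probability of M is at least 1−ε. Hence M verifies UPOWER = { a^(2^i) : i ≥ 0 } with bounded error using certificates of length log n for members. -/

import Mathlib

open Matrix

/-- A superoperator on `ℂ^m`: a finite family of `m×m` complex matrices `E_1,…,E_k`
with `∑ j, E_jᴴ E_j = I`. -/
structure Superop (m : ℕ) where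
  k : ℕ
  E : Fin k → Matrix (Fin m) (Fin m) ℂ
  valid : ∑ j, (E j)ᴴ * E j = 1

/-- Action of a superoperator on a density matrix: `ρ ↦ ∑ j, E_j ρ E_jᴴ`. -/
noncomputable def Superop.app {m : ℕ} (S : Superop m) (ρ : Matrix (Fin m) (Fin m) ℂ) :
    Matrix (Fin m) (Fin m) ℂ :=
  ∑ j, S.E j * ρ * (S.E j)ᴴ

/-- The initial density matrix `e₁ e₁†`. -/
def rho0 (m : ℕ) : Matrix (Fin m) (Fin m) ℂ :=
  Matrix.of fun j j' => if j.val = 0 ∧ j'.val = 0 then 1 else 0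

/-- An MA-PostQFA whose certificate and input symbols range over the type `Sym`:
superoperators for the markers `◐, ◑, ¢, $` and for each symbol, together with disjoint
sets of postselecting accepting and rejecting states. -/
structure MAPostQFA (Sym : Type) where
  m : ℕ
  Eopen : Superop m
  Eclose : Superop m
  Ecent : Superop m
  Edollar : Superop m
  Esym : Sym → Superop m
  Qacc : Finset (Fin m)
  Qrej : Finset (Fin m)
  disj : Disjoint Qacc Qrej

namespace MAPostQFA

variable {Sym : Type}

/-- The final density matrix on certificate `c` and input `x`: apply
`E_◐, E_{c_1}, …, E_{c_k}, E_◑, E_¢, E_{x_1}, …, E_{x_l}, E_$` in order to `ρ₀`. -/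
noncomputable def finalRho (M : MAPostQFA Sym) (c x : List Sym) : Matrix (Fin M.m) (Fin M.m) ℂ :=
  M.Edollar.app <|
    x.foldl (fun ρ s => (M.Esym s).app ρ) <|
      M.Ecent.app <| M.Eclose.app <|
        c.foldl (fun ρ s => (M.Esym s).app ρ) (M.Eopen.app (rho0 M.m))

/-- `a(c,x)`: total final weight on the postselecting accepting states. -/
noncomputable def aPr (M : MAPostQFA Sym) (c x : List Sym) : ℝ :=
  ∑ j ∈ M.Qacc, (M.finalRho c x j j).re

/-- `r(c,x)`: total final weight on the postselecting rejecting states. -/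
noncomputable def rPr (M : MAPostQFA Sym) (c x : List Sym) : ℝ :=
  ∑ j ∈ M.Qrej, (M.finalRho c x j j).re

/-- Acceptance probability `a/(a+r)` after postselection. -/
noncomputable def accProb (M : MAPostQFA Sym) (c x : List Sym) : ℝ :=
  M.aPr c x / (M.aPr c x + M.rPr c x)

/-- Rejection probability `r/(a+r)` after postselection. -/
noncomputable def rejProb (M : MAPostQFA Sym) (c x : List Sym) : ℝ :=
  M.rPr c x / (M.aPr c x + M.rPr c x)

end MAPostQFA

namespace UPower
noncomputable section

def op {u : ℕ} (w : Fin u → ℂ) : Matrix (Fin u) (Fin u) ℂ :=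
  Matrix.of fun i j => w i * (starRingEnd ℂ) (w j)

def emb {u : ℕ} (M : Matrix (Fin u ⊕ Fin u) (Fin u ⊕ Fin u) ℂ) :
    Matrix (Fin (u + u)) (Fin (u + u)) ℂ :=
  Matrix.reindex finSumFinEquiv finSumFinEquiv M

lemma emb_mul {u : ℕ} (M N : Matrix (Fin u ⊕ Fin u) (Fin u ⊕ Fin u) ℂ) :
    emb M * emb N = emb (M * N) := by
  simp [emb, Matrix.reindex_apply, Matrix.submatrix_mul_equiv]

lemma emb_ct {u : ℕ} (M : Matrix (Fin u ⊕ Fin u) (Fin u ⊕ Fin u) ℂ) :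
    (emb M)ᴴ = emb Mᴴ := by
  simp [emb, Matrix.reindex_apply, Matrix.conjTranspose_submatrix]

lemma emb_one {u : ℕ} : emb (u := u) 1 = 1 := by
  simp [emb, Matrix.reindex_apply, Matrix.submatrix_one_equiv]

lemma emb_add {u : ℕ} (M N : Matrix (Fin u ⊕ Fin u) (Fin u ⊕ Fin u) ℂ) :
    emb M + emb N = emb (M + N) := by
  ext i j; simp [emb]

lemma conj_mul_op {u : ℕ} (A : Matrix (Fin u) (Fin u) ℂ) (w : Fin u → ℂ) :
    A * op w * Aᴴ = op (A *ᵥ w) := by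
  ext i j
  simp only [op, Matrix.mul_apply, Matrix.conjTranspose_apply, Matrix.mulVec,
    dotProduct, Matrix.of_apply, map_sum, Finset.sum_mul, Finset.mul_sum,
    _root_.map_mul, Complex.star_def]
  exact Finset.sum_congr rfl fun k _ => Finset.sum_congr rfl fun l _ => by ring

def Bmat {u : ℕ} (d : Fin u → ℝ) : Matrix (Fin u) (Fin u) ℂ :=
  Matrix.diagonal fun j => (Real.sqrt (1 - d j) : ℂ)

lemma Bmat_gram {u : ℕ} (d : Fin u → ℝ) (hd : ∀ j, d j ≤ 1) :
    (Bmat d)ᴴ * Bmat d = Matrix.diagonal fun j => ((1 - d j : ℝ) : ℂ) := by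
  rw [Bmat, Matrix.diagonal_conjTranspose, Matrix.diagonal_mul_diagonal]
  refine congrArg Matrix.diagonal (funext fun j => ?_)
  simp only [Pi.star_apply, Complex.star_def, Complex.conj_ofReal]
  rw [← Complex.ofReal_mul, Real.mul_self_sqrt (by linarith [hd j])]

def mkSO {u : ℕ} (A : Matrix (Fin u) (Fin u) ℂ) (d : Fin u → ℝ)
    (hA : Aᴴ * A = Matrix.diagonal fun j => ((d j : ℝ) : ℂ)) (hd : ∀ j, d j ≤ 1) :
    Superop (u + u) where
  k := 3
  E := ![emb (fromBlocks A 0 0 0), emb (fromBlocks 0 0 (Bmat d) 0), emb (fromBlocks 0 0 0 1)]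
  valid := by
    rw [Fin.sum_univ_three]
    simp only [Matrix.cons_val_zero, Matrix.cons_val_one, Matrix.head_cons,
      Matrix.cons_val_two, Matrix.tail_cons]
    rw [emb_ct, emb_ct, emb_ct, emb_mul, emb_mul, emb_mul, emb_add, emb_add]
    rw [fromBlocks_conjTranspose, fromBlocks_conjTranspose, fromBlocks_conjTranspose]
    rw [fromBlocks_multiply, fromBlocks_multiply, fromBlocks_multiply]
    rw [← emb_one]
    congr 1
    simp only [Matrix.mul_zero, Matrix.zero_mul, add_zero, zero_add,
      Matrix.conjTranspose_zero, Matrix.conjTranspose_one, Matrix.one_mul]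
    rw [hA, Bmat_gram d hd, ← Matrix.fromBlocks_one]
    have : (Matrix.diagonal fun j => ((d j : ℝ) : ℂ)) +
        (Matrix.diagonal fun j => ((1 - d j : ℝ) : ℂ)) = 1 := by
      rw [Matrix.diagonal_add, ← Matrix.diagonal_one]
      refine congrArg Matrix.diagonal (funext fun j => ?_)
      push_cast; ring
    rw [Matrix.fromBlocks_add, Matrix.fromBlocks_add]
    simp only [add_zero, zero_add]
    rw [this]

lemma mkSO_app {u : ℕ} (A : Matrix (Fin u) (Fin u) ℂ) (d : Fin u → ℝ)
    (hA : Aᴴ * A = Matrix.diagonal fun j => ((d j : ℝ) : ℂ)) (hd : ∀ j, d j ≤ 1)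
    (P T : Matrix (Fin u) (Fin u) ℂ) :
    (mkSO A d hA hd).app (emb (fromBlocks P 0 0 T)) =
      emb (fromBlocks (A * P * Aᴴ) 0 0 (Bmat d * P * (Bmat d)ᴴ + T)) := by
  rw [Superop.app]
  show ∑ j : Fin 3, _ = _
  rw [Fin.sum_univ_three]
  simp only [mkSO, Matrix.cons_val_zero, Matrix.cons_val_one, Matrix.head_cons,
    Matrix.cons_val_two, Matrix.tail_cons]
  rw [emb_ct, emb_ct, emb_ct, emb_mul, emb_mul, emb_mul, emb_mul, emb_mul, emb_mul,
    emb_add, emb_add]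
  rw [fromBlocks_conjTranspose, fromBlocks_conjTranspose, fromBlocks_conjTranspose]
  rw [fromBlocks_multiply, fromBlocks_multiply, fromBlocks_multiply,
    fromBlocks_multiply, fromBlocks_multiply, fromBlocks_multiply]
  simp only [Matrix.mul_zero, Matrix.zero_mul, add_zero, zero_add,
    Matrix.conjTranspose_zero, Matrix.conjTranspose_one, Matrix.one_mul, Matrix.mul_one]
  rw [Matrix.fromBlocks_add, Matrix.fromBlocks_add]
  simp only [add_zero, zero_add]

/-- invariant: the state is an embedded block matrix with pure useful part `w`. -/
def Good {u : ℕ} (ρ : Matrix (Fin (u + u)) (Fin (u + u)) ℂ) (w : Fin u → ℂ) : Prop :=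
  ∃ T, ρ = emb (fromBlocks (op w) 0 0 T)

lemma Good.step {u : ℕ} {A : Matrix (Fin u) (Fin u) ℂ} {d : Fin u → ℝ}
    {hA : Aᴴ * A = Matrix.diagonal fun j => ((d j : ℝ) : ℂ)} {hd : ∀ j, d j ≤ 1}
    {ρ : Matrix (Fin (u + u)) (Fin (u + u)) ℂ} {w : Fin u → ℂ}
    (h : Good ρ w) : Good ((mkSO A d hA hd).app ρ) (A *ᵥ w) := by
  obtain ⟨T, rfl⟩ := h
  exact ⟨_, by rw [mkSO_app, conj_mul_op]⟩

lemma Good.fold {u : ℕ} {A : Matrix (Fin u) (Fin u) ℂ} {d : Fin u → ℝ}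
    {hA : Aᴴ * A = Matrix.diagonal fun j => ((d j : ℝ) : ℂ)} {hd : ∀ j, d j ≤ 1}
    (v : ℕ → Fin u → ℂ) (hv : ∀ k, A *ᵥ v k = v (k + 1)) :
    ∀ (n : ℕ) (ρ : Matrix (Fin (u + u)) (Fin (u + u)) ℂ), Good ρ (v 0) →
      Good (List.foldl (fun ρ (_ : Unit) => (mkSO A d hA hd).app ρ) ρ (List.replicate n ()))
        (v n) := by
  intro n
  induction n generalizing v with
  | zero => intro ρ h; exact h
  | succ n ih =>
    intro ρ h
    rw [List.replicate_succ, List.foldl_cons]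
    have h1 : Good ((mkSO A d hA hd).app ρ) ((fun k => v (k + 1)) 0) := by
      simpa [← hv 0] using h.step (A := A) (d := d) (hA := hA) (hd := hd)
    exact ih (fun k => v (k + 1)) (fun k => hv (k + 1)) _ h1

lemma good_rho0 {u : ℕ} :
    Good (u := u) (rho0 (u + u)) (fun a => if a.val = 0 then 1 else 0) := by
  refine ⟨0, ?_⟩
  ext i j
  obtain ⟨i', rfl⟩ := finSumFinEquiv.surjective i
  obtain ⟨j', rfl⟩ := finSumFinEquiv.surjective j
  rw [emb, Matrix.reindex_apply, Matrix.submatrix_apply,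
    Equiv.symm_apply_apply, Equiv.symm_apply_apply]
  cases i' with
  | inl a =>
    cases j' with
    | inl b =>
      simp only [Matrix.fromBlocks_apply₁₁, rho0, op, Matrix.of_apply,
        finSumFinEquiv_apply_left, Fin.coe_castAdd]
      by_cases ha : (a : ℕ) = 0 <;> by_cases hb : (b : ℕ) = 0 <;>
        simp [ha, hb]
    | inr b =>
      have hu : 0 < u := b.pos
      simp only [Matrix.fromBlocks_apply₁₂, rho0, Matrix.of_apply,
        finSumFinEquiv_apply_right, Fin.coe_natAdd, Matrix.zero_apply]
      rw [if_neg (by omega)]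
  | inr a =>
    have hu : 0 < u := a.pos
    have hne : ((finSumFinEquiv (Sum.inr a : Fin u ⊕ Fin u)) : ℕ) ≠ 0 := by
      simp only [finSumFinEquiv_apply_right, Fin.coe_natAdd]; omega
    cases j' <;>
      · simp only [Matrix.fromBlocks_apply₂₁, Matrix.fromBlocks_apply₂₂, rho0,
          Matrix.of_apply, Matrix.zero_apply]
        rw [if_neg (by tauto)]

/-! ### Concrete machine -/

@[simp] lemma cons_val_five' {α : Type*} {m : ℕ} (x : α) (u : Fin (m+5) → α) :
    Matrix.vecCons x u 5 =
      Matrix.vecHead (Matrix.vecTail (Matrix.vecTail (Matrix.vecTail (Matrix.vecTail u)))) := rfl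
@[simp] lemma cons_val_six' {α : Type*} {m : ℕ} (x : α) (u : Fin (m+6) → α) :
    Matrix.vecCons x u 6 =
      Matrix.vecHead (Matrix.vecTail (Matrix.vecTail (Matrix.vecTail
        (Matrix.vecTail (Matrix.vecTail u))))) := rfl

def Aopen (g : ℝ) : Matrix (Fin 7) (Fin 7) ℂ :=
  !![1/2,0,0,0,0,0,0;
     1/2,0,0,0,0,0,0;
     (g:ℂ)/2,0,0,0,0,0,0;
     0,0,0,0,0,0,0;
     0,0,0,0,0,0,0;
     0,0,0,0,0,0,0;
     0,0,0,0,0,0,0]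

def dopen (g : ℝ) : Fin 7 → ℝ := ![1/2 + g^2/4, 0, 0, 0, 0, 0, 0]

def Asym : Matrix (Fin 7) (Fin 7) ℂ :=
  !![1,0,0,0,0,0,0;
     0,1/2,0,0,0,0,0;
     0,0,1/2,0,0,0,0;
     0,0,0,1/2,0,0,0;
     0,0,0,0,4/5,-3/20,0;
     0,0,0,0,3/5,1/5,0;
     0,0,0,0,0,0,1/2]

def dsym : Fin 7 → ℝ := ![1, 1/4, 1/4, 1/4, 1, 1/16, 1/4]

def Aclose : Matrix (Fin 7) (Fin 7) ℂ :=
  !![0,0,0,0,0,0,0;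
     0,0,0,0,0,0,0;
     0,0,0,0,0,0,0;
     1,0,0,0,0,0,0;
     0,1,0,0,0,0,0;
     0,0,0,0,0,0,0;
     0,0,1,0,0,0,0]

def dclose : Fin 7 → ℝ := ![1, 1, 1, 0, 0, 0, 0]

def Acent : Matrix (Fin 7) (Fin 7) ℂ :=
  !![0,0,0,0,0,0,0;
     0,0,0,0,0,0,0;
     0,0,0,0,0,0,0;
     0,0,0,1,0,0,0;
     0,0,0,0,1,0,0;
     0,0,0,0,0,1,0;
     0,0,0,0,0,0,1]

def dcent : Fin 7 → ℝ := ![0, 0, 0, 1, 1, 1, 1]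

def Adollar : Matrix (Fin 7) (Fin 7) ℂ :=
  !![0,0,0,0,0,0,0;
     0,0,0,0,0,0,0;
     0,0,0,0,0,0,0;
     0,0,0,0,0,0,0;
     0,0,0,3/5,0,1/2,0;
     0,0,0,-3/5,0,1/2,0;
     0,0,0,0,0,0,1]

def ddollar : Fin 7 → ℝ := ![0, 0, 0, 18/25, 0, 1/2, 1]

set_option maxHeartbeats 2000000 in
lemma gram_open (g : ℝ) :
    (Aopen g)ᴴ * (Aopen g) = Matrix.diagonal fun j => ((dopen g j : ℝ) : ℂ) := by
  ext i j
  fin_cases i <;> fin_cases j <;>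
    simp [Aopen, dopen, Matrix.mul_apply, Fin.sum_univ_seven,
      Matrix.conjTranspose_apply, Matrix.diagonal, Complex.conj_ofReal, map_div₀,
      map_ofNat, Matrix.vecHead, Matrix.vecTail] <;>
    (push_cast; try ring)

set_option maxHeartbeats 2000000 in
lemma gram_sym : Asymᴴ * Asym = Matrix.diagonal fun j => ((dsym j : ℝ) : ℂ) := by
  ext i j
  fin_cases i <;> fin_cases j <;>
    simp [Asym, dsym, Matrix.mul_apply, Fin.sum_univ_seven,
      Matrix.conjTranspose_apply, Matrix.diagonal, Complex.conj_ofReal, map_div₀,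
      map_ofNat, Matrix.vecHead, Matrix.vecTail] <;>
    norm_num

set_option maxHeartbeats 2000000 in
lemma gram_close : Acloseᴴ * Aclose = Matrix.diagonal fun j => ((dclose j : ℝ) : ℂ) := by
  ext i j
  fin_cases i <;> fin_cases j <;>
    simp [Aclose, dclose, Matrix.mul_apply, Fin.sum_univ_seven,
      Matrix.conjTranspose_apply, Matrix.diagonal, Complex.conj_ofReal, map_div₀,
      map_ofNat, Matrix.vecHead, Matrix.vecTail]

set_option maxHeartbeats 2000000 in
lemma gram_cent : Acentᴴ * Acent = Matrix.diagonal fun j => ((dcent j : ℝ) : ℂ) := by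
  ext i j
  fin_cases i <;> fin_cases j <;>
    simp [Acent, dcent, Matrix.mul_apply, Fin.sum_univ_seven,
      Matrix.conjTranspose_apply, Matrix.diagonal, Complex.conj_ofReal, map_div₀,
      map_ofNat, Matrix.vecHead, Matrix.vecTail]

set_option maxHeartbeats 2000000 in
lemma gram_dollar : Adollarᴴ * Adollar = Matrix.diagonal fun j => ((ddollar j : ℝ) : ℂ) := by
  ext i j
  fin_cases i <;> fin_cases j <;>
    simp [Adollar, ddollar, Matrix.mul_apply, Fin.sum_univ_seven,
      Matrix.conjTranspose_apply, Matrix.diagonal, Complex.conj_ofReal, map_div₀,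
      map_ofNat, Matrix.vecHead, Matrix.vecTail] <;>
    norm_num

lemma hd_open (g : ℝ) (hg : g^2 ≤ 2) : ∀ j, dopen g j ≤ 1 := by
  intro j
  fin_cases j <;>
    simp [dopen, Matrix.vecHead, Matrix.vecTail] <;> linarith

lemma hd_sym : ∀ j, dsym j ≤ 1 := by
  intro j; fin_cases j <;> norm_num [dsym, Matrix.vecHead, Matrix.vecTail]

lemma hd_close : ∀ j, dclose j ≤ 1 := by
  intro j; fin_cases j <;> norm_num [dclose, Matrix.vecHead, Matrix.vecTail]

lemma hd_cent : ∀ j, dcent j ≤ 1 := by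
  intro j; fin_cases j <;> norm_num [dcent, Matrix.vecHead, Matrix.vecTail]

lemma hd_dollar : ∀ j, ddollar j ≤ 1 := by
  intro j; fin_cases j <;> norm_num [ddollar, Matrix.vecHead, Matrix.vecTail]

/-! ### Vectors along the computation -/

def hC (k : ℕ) : ℂ := (2:ℂ)⁻¹ ^ k
def rr (k : ℕ) : ℝ := (2:ℝ)⁻¹ ^ k

lemma hC_eq (k : ℕ) : hC k = ((rr k : ℝ) : ℂ) := by
  rw [hC, rr]; push_cast; ring

lemma rr_pos (k : ℕ) : 0 < rr k := by rw [rr]; positivity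

def v0 : Fin 7 → ℂ := ![1,0,0,0,0,0,0]
def vc (g : ℝ) (k : ℕ) : Fin 7 → ℂ := ![1/2, hC k/2, (g:ℂ)*hC k/2, 0, 0, 0, 0]
def vin (g : ℝ) (i n : ℕ) : Fin 7 → ℂ :=
  ![0, 0, 0, hC n/2, hC i*hC n*(1+(3/5)*(n:ℂ))/2, hC i*hC n*((6/5)*(n:ℂ))/2,
    (g:ℂ)*hC i*hC n/2]
def vfin (g : ℝ) (i n : ℕ) : Fin 7 → ℂ :=
  ![0, 0, 0, 0, (3/5)*(hC n/2) + (1/2)*(hC i*hC n*((6/5)*(n:ℂ))/2),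
    (3/10)*hC n*(hC i*(n:ℂ) - 1), (g:ℂ)*hC i*hC n/2]

lemma v0_eq : (fun a : Fin 7 => if (a : ℕ) = 0 then (1:ℂ) else 0) = v0 := by
  funext a; fin_cases a <;> simp [v0, Matrix.vecHead, Matrix.vecTail]

lemma step_open (g : ℝ) : Aopen g *ᵥ v0 = vc g 0 := by
  funext j
  fin_cases j <;>
    simp [Aopen, v0, vc, hC, Matrix.mulVec, dotProduct, Fin.sum_univ_seven,
      Matrix.vecHead, Matrix.vecTail]

lemma step_sym_c (g : ℝ) (k : ℕ) : Asym *ᵥ vc g k = vc g (k+1) := by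
  funext j
  fin_cases j <;>
    simp [Asym, vc, hC, Matrix.mulVec, dotProduct, Fin.sum_univ_seven,
      Matrix.vecHead, Matrix.vecTail, pow_succ] <;> ring

lemma step_close (g : ℝ) (i : ℕ) : Aclose *ᵥ vc g i = vin g i 0 := by
  funext j
  fin_cases j <;>
    simp [Aclose, vc, vin, hC, Matrix.mulVec, dotProduct, Fin.sum_univ_seven,
      Matrix.vecHead, Matrix.vecTail] <;> (push_cast; try ring)

lemma step_cent (g : ℝ) (i : ℕ) : Acent *ᵥ vin g i 0 = vin g i 0 := by
  funext j
  fin_cases j <;>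
    simp [Acent, vin, hC, Matrix.mulVec, dotProduct, Fin.sum_univ_seven,
      Matrix.vecHead, Matrix.vecTail]

lemma step_sym_in (g : ℝ) (i n : ℕ) : Asym *ᵥ vin g i n = vin g i (n+1) := by
  funext j
  fin_cases j <;>
    simp [Asym, vin, hC, Matrix.mulVec, dotProduct, Fin.sum_univ_seven,
      Matrix.vecHead, Matrix.vecTail, pow_succ] <;>
    (push_cast; try ring)

lemma step_dollar (g : ℝ) (i n : ℕ) : Adollar *ᵥ vin g i n = vfin g i n := by
  funext j
  fin_cases j <;>
    simp [Adollar, vin, vfin, hC, Matrix.mulVec, dotProduct, Fin.sum_univ_seven,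
      Matrix.vecHead, Matrix.vecTail] <;> (push_cast; try ring)

/-! ### The machine -/

def Mup (g : ℝ) (hg : g^2 ≤ 2) : MAPostQFA Unit where
  m := 7 + 7
  Eopen := mkSO (Aopen g) (dopen g) (gram_open g) (hd_open g hg)
  Eclose := mkSO Aclose dclose gram_close hd_close
  Ecent := mkSO Acent dcent gram_cent hd_cent
  Edollar := mkSO Adollar ddollar gram_dollar hd_dollar
  Esym := fun _ => mkSO Asym dsym gram_sym hd_sym
  Qacc := {(⟨6, by norm_num⟩ : Fin (7+7))}
  Qrej := {(⟨5, by norm_num⟩ : Fin (7+7))}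
  disj := by decide

lemma final_good (g : ℝ) (hg : g^2 ≤ 2) (i n : ℕ) :
    Good ((Mup g hg).finalRho (List.replicate i ()) (List.replicate n ()))
      (vfin g i n) := by
  have h0 : Good (rho0 (7 + 7)) v0 := v0_eq ▸ good_rho0
  have h1 : Good ((mkSO (Aopen g) (dopen g) (gram_open g) (hd_open g hg)).app
      (rho0 (7+7))) (vc g 0) := by
    have h := h0.step (A := Aopen g) (d := dopen g) (hA := gram_open g)
      (hd := hd_open g hg)
    rwa [step_open] at h
  have h2 := Good.fold (A := Asym) (d := dsym) (hA := gram_sym) (hd := hd_sym)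
    (vc g) (step_sym_c g) i _ h1
  have h3 : Good ((mkSO Aclose dclose gram_close hd_close).app
      (List.foldl (fun ρ (_ : Unit) => (mkSO Asym dsym gram_sym hd_sym).app ρ)
        ((mkSO (Aopen g) (dopen g) (gram_open g) (hd_open g hg)).app (rho0 (7+7)))
        (List.replicate i ()))) (vin g i 0) := by
    have h := h2.step (A := Aclose) (d := dclose) (hA := gram_close) (hd := hd_close)
    rwa [step_close] at h
  have h4 := h3.step (A := Acent) (d := dcent) (hA := gram_cent) (hd := hd_cent)
  rw [step_cent] at h4
  have h5 := Good.fold (A := Asym) (d := dsym) (hA := gram_sym) (hd := hd_sym)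
    (vin g i) (step_sym_in g i) n _ h4
  have h6 := h5.step (A := Adollar) (d := ddollar) (hA := gram_dollar) (hd := hd_dollar)
  rw [step_dollar] at h6
  exact h6

lemma emb_diag {u : ℕ} (M : Matrix (Fin u ⊕ Fin u) (Fin u ⊕ Fin u) ℂ) (a : Fin u) :
    emb M (Fin.castAdd u a) (Fin.castAdd u a) = M (Sum.inl a) (Sum.inl a) := by
  rw [emb, Matrix.reindex_apply, Matrix.submatrix_apply,
    finSumFinEquiv_symm_apply_castAdd]

lemma aPr_eq (g : ℝ) (hg : g^2 ≤ 2) (i n : ℕ) :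
    (Mup g hg).aPr (List.replicate i ()) (List.replicate n ()) =
      (g * rr i * rr n / 2)^2 := by
  obtain ⟨T, hT⟩ := final_good g hg i n
  rw [MAPostQFA.aPr]
  have hQ : (Mup g hg).Qacc = {(⟨6, by norm_num⟩ : Fin (7+7))} := rfl
  rw [hQ]; erw [Finset.sum_singleton]; rw [hT]
  have h6 : (⟨6, by norm_num⟩ : Fin (7+7)) = Fin.castAdd 7 (6 : Fin 7) := rfl
  rw [h6, emb_diag, Matrix.fromBlocks_apply₁₁]
  have hv : vfin g i n (6 : Fin 7) = (((g * rr i * rr n / 2 : ℝ)) : ℂ) := by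
    show (g:ℂ)*hC i*hC n/2 = _
    rw [hC_eq, hC_eq]; push_cast; ring
  rw [op, Matrix.of_apply, hv, Complex.conj_ofReal, ← Complex.ofReal_mul,
    Complex.ofReal_re]
  ring

lemma rPr_eq (g : ℝ) (hg : g^2 ≤ 2) (i n : ℕ) :
    (Mup g hg).rPr (List.replicate i ()) (List.replicate n ()) =
      ((3/10) * rr n * (rr i * n - 1))^2 := by
  obtain ⟨T, hT⟩ := final_good g hg i n
  rw [MAPostQFA.rPr]
  have hQ : (Mup g hg).Qrej = {(⟨5, by norm_num⟩ : Fin (7+7))} := rfl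
  rw [hQ]; erw [Finset.sum_singleton]; rw [hT]
  have h5 : (⟨5, by norm_num⟩ : Fin (7+7)) = Fin.castAdd 7 (5 : Fin 7) := rfl
  rw [h5, emb_diag, Matrix.fromBlocks_apply₁₁]
  have hv : vfin g i n (5 : Fin 7) = (((3/10) * rr n * (rr i * n - 1) : ℝ) : ℂ) := by
    show (3/10)*hC n*(hC i*(n:ℂ) - 1) = _
    rw [hC_eq, hC_eq]; push_cast; ring
  rw [op, Matrix.of_apply, hv, Complex.conj_ofReal, ← Complex.ofReal_mul,
    Complex.ofReal_re]
  ring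

end
end UPower

/-- for every `0 < ε < 1/2` there is a unary MA-PostQFA verifying
`UPOWER = { a^(2^i) }` with bounded error, using certificates of length `log n` for
members. -/
theorem mapostqfa_upower (ε : ℝ) (hε0 : 0 < ε) (hε : ε < 1 / 2) :
    ∃ M : MAPostQFA Unit,
      (∀ i n : ℕ,
        0 < M.aPr (List.replicate i ()) (List.replicate n ()) +
            M.rPr (List.replicate i ()) (List.replicate n ())) ∧
      (∀ i : ℕ, 1 - ε ≤ M.accProb (List.replicate i ()) (List.replicate (2 ^ i) ())) ∧
      (∀ n : ℕ, (¬ ∃ i : ℕ, n = 2 ^ i) → ∀ i : ℕ,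
        1 - ε ≤ M.rejProb (List.replicate i ()) (List.replicate n ())) := by
  have hε2 : (0:ℝ) ≤ ε := le_of_lt hε0
  set g : ℝ := Real.sqrt ε / 2 with hgdef
  have hgsq : g^2 = ε/4 := by
    rw [hgdef, div_pow, Real.sq_sqrt hε2]; norm_num
  have hg0 : 0 < g := by
    rw [hgdef]; positivity
  have hg2 : g^2 ≤ 2 := by rw [hgsq]; linarith
  refine ⟨UPower.Mup g hg2, ?_, ?_, ?_⟩
  · intro i n
    rw [UPower.aPr_eq, UPower.rPr_eq]
    have h1 : 0 < (g * UPower.rr i * UPower.rr n / 2)^2 := by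
      have := UPower.rr_pos i; have := UPower.rr_pos n; positivity
    nlinarith [sq_nonneg ((3/10) * UPower.rr n * (UPower.rr i * n - 1))]
  · intro i
    rw [MAPostQFA.accProb, UPower.aPr_eq, UPower.rPr_eq]
    have hrr : UPower.rr i * ((2^i : ℕ) : ℝ) - 1 = 0 := by
      rw [UPower.rr]; push_cast
      rw [inv_pow, inv_mul_cancel₀ (by positivity : ((2:ℝ)^i) ≠ 0)]
      ring
    rw [hrr]
    have h1 : 0 < (g * UPower.rr i * UPower.rr (2^i) / 2)^2 := by
      have := UPower.rr_pos i; have := UPower.rr_pos (2^i); positivity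
    have : ((3:ℝ)/10 * UPower.rr (2^i) * 0)^2 = 0 := by ring
    rw [this, add_zero, div_self (ne_of_gt h1)]
    linarith
  · intro n hn i
    rw [MAPostQFA.rejProb, UPower.aPr_eq, UPower.rPr_eq]
    have hrr2 : UPower.rr i * (2:ℝ)^i = 1 := by
      rw [UPower.rr, inv_pow, inv_mul_cancel₀ (by positivity : ((2:ℝ)^i) ≠ 0)]
    have hfact : UPower.rr i * (n:ℝ) - 1 = UPower.rr i * ((n:ℝ) - 2^i) := by
      rw [mul_sub, hrr2]
    have hint : (1:ℝ) ≤ ((n:ℝ) - 2^i)^2 := by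
      have h1 : (n:ℤ) - 2^i ≠ 0 := by
        intro h
        have h' : (n:ℤ) = 2^i := by linarith
        exact hn ⟨i, by exact_mod_cast h'⟩
      have h2 : (1:ℤ) ≤ |(n:ℤ) - 2^i| := Int.one_le_abs h1
      have h3 : (1:ℤ) ≤ ((n:ℤ) - 2^i)^2 := by nlinarith [sq_abs ((n:ℤ) - 2^i)]
      calc (1:ℝ) = ((1:ℤ) : ℝ) := by norm_num
        _ ≤ ((((n:ℤ) - 2^i)^2 : ℤ) : ℝ) := by exact_mod_cast h3
        _ = ((n:ℝ) - 2^i)^2 := by push_cast; ring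
    have hKi := UPower.rr_pos i
    have hKn := UPower.rr_pos n
    have ha : (g * UPower.rr i * UPower.rr n / 2)^2 =
        ε/16 * (UPower.rr i * UPower.rr n)^2 := by
      have h : (g * UPower.rr i * UPower.rr n / 2)^2 =
          g^2 * (UPower.rr i * UPower.rr n)^2 / 4 := by ring
      rw [h, hgsq]; ring
    have hr : ((3/10) * UPower.rr n * (UPower.rr i * n - 1))^2 =
        9/100 * (UPower.rr i * UPower.rr n)^2 * ((n:ℝ) - 2^i)^2 := by
      rw [hfact]; ring
    rw [ha, hr]
    set K2 := (UPower.rr i * UPower.rr n)^2 with hK2def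
    have hK2 : 0 < K2 := by rw [hK2def]; positivity
    set D2 := ((n:ℝ) - 2^i)^2 with hD2def
    have hD2 : 0 ≤ D2 := sq_nonneg _
    have hpos : 0 < ε/16 * K2 + 9/100 * K2 * D2 := by nlinarith
    rw [le_div_iff₀ hpos]
    nlinarith [mul_pos hK2 hε0, mul_le_mul_of_nonneg_left hint (le_of_lt (mul_pos hε0 hK2))]
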